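/- The four-element diamond poset {a, b, c, d} with b < a, b < c, a < d, c < d (a, c incomparable) is not sub-representable. -/

import Mathlib

def SubRepresentable (α : Type*) [PartialOrder α] : Prop :=
  ∃ g : Set α → Set α,
    (∀ P₁ P₂ : Set α, Nonempty (↥P₁ ↪o ↥P₂) ↔ g P₁ ⊆ g P₂) ∧
    ∀ P₁ : Set α, Nonempty (↥P₁ ↪o ↥(g P₁)) ∧ Nonempty (↥(g P₁) ↪o ↥P₁)
/-- Points 0,1,2,3 stand for b,a,c,d: b<a, b<c, a<d, c<d (and b<d). -/
def leD : Fin 4 → Fin 4 → Bool := fun x y =>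
  x = y || (x = 0 && y = 1) || (x = 0 && y = 2) || (x = 0 && y = 3) ||
    (x = 1 && y = 3) || (x = 2 && y = 3)

def Diamond : Type := Fin 4

instance : DecidableEq Diamond := inferInstanceAs (DecidableEq (Fin 4))
instance : Fintype Diamond := inferInstanceAs (Fintype (Fin 4))

instance : PartialOrder Diamond where
  le a b := leD a b
  le_refl := have h : ∀ a : Fin 4, leD a a = true := by decide
    fun a => h a
  le_trans := have h : ∀ a b c : Fin 4, leD a b = true → leD b c = true → leD a c = true := by decide
    fun a b c => h a b c
  le_antisymm := have h : ∀ a b : Fin 4, leD a b = true → leD b a = true → a = b := by decide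
    fun a b => h a b

/- ### Auxiliary definitions -/

instance : DecidableRel (fun a b : Diamond => a ≤ b) := fun a b =>
  decidable_of_iff (leD a b = true) Iff.rfl

def d0 : Diamond := (0 : Fin 4)
def d1 : Diamond := (1 : Fin 4)
def d2 : Diamond := (2 : Fin 4)
def d3 : Diamond := (3 : Fin 4)

/-- the 2-antichain -/
def AA : Set Diamond := {d1, d2}
/-- a 2-chain -/
def CC : Set Diamond := {d1, d3}
/-- the "V" poset: two incomparable elements below a top -/
def VV : Set Diamond := {d1, d2, d3}
/-- the "Lambda" poset: a bottom below two incomparable elements -/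
def LL : Set Diamond := {d0, d1, d2}

/-- Inclusion of sets gives an order embedding on subtypes. -/
lemma inclEmb {α : Type*} [Preorder α] {P Q : Set α} (h : P ⊆ Q) :
    Nonempty (↥P ↪o ↥Q) :=
  ⟨⟨⟨Set.inclusion h, Set.inclusion_injective h⟩, Iff.rfl⟩⟩

lemma mem_CC' {x : Diamond} (hx : x ∈ CC) : x = d1 ∨ x = d3 :=
  (Set.mem_insert_iff.mp hx).imp id Set.mem_singleton_iff.mp

lemma mem_AA' {x : Diamond} (hx : x ∈ AA) : x = d1 ∨ x = d2 :=
  (Set.mem_insert_iff.mp hx).imp id Set.mem_singleton_iff.mp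

lemma mem_LL' {x : Diamond} (hx : x ∈ LL) : x = d0 ∨ x = d1 ∨ x = d2 :=
  (Set.mem_insert_iff.mp hx).imp id fun h =>
    (Set.mem_insert_iff.mp h).imp id Set.mem_singleton_iff.mp

/-- The 2-chain embeds into the Lambda poset. -/
lemma embCL : Nonempty (↥CC ↪o ↥LL) := by
  have hd0 : d0 ∈ LL := by left; rfl
  have hd1 : d1 ∈ LL := by right; left; rfl
  have h31 : (d3 : Diamond) ≠ d1 := by decide
  refine ⟨⟨⟨fun x => if x.1 = d1 then ⟨d0, hd0⟩ else ⟨d1, hd1⟩, ?_⟩, ?_⟩⟩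
  · rintro ⟨x, hx⟩ ⟨y, hy⟩ hxy
    simp only at hxy
    rcases mem_CC' hx with rfl | rfl <;> rcases mem_CC' hy with rfl | rfl
    · rfl
    · rw [if_pos rfl, if_neg h31] at hxy
      exact absurd (congrArg Subtype.val hxy) (show (d0:Diamond) ≠ d1 by decide)
    · rw [if_pos rfl, if_neg h31] at hxy
      exact absurd (congrArg Subtype.val hxy.symm) (show (d0:Diamond) ≠ d1 by decide)
    · rfl
  · rintro ⟨x, hx⟩ ⟨y, hy⟩
    change (if x = d1 then (⟨d0, hd0⟩ : ↥LL) else ⟨d1, hd1⟩) ≤ (if y = d1 then (⟨d0, hd0⟩ : ↥LL) else ⟨d1, hd1⟩) ↔ _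
    rcases mem_CC' hx with rfl | rfl <;> rcases mem_CC' hy with rfl | rfl
    · simp only [if_true, Subtype.mk_le_mk]; decide
    · rw [if_pos rfl, if_neg h31]; simp only [Subtype.mk_le_mk]; decide
    · rw [if_neg h31, if_pos rfl]; simp only [Subtype.mk_le_mk]; decide
    · rw [if_neg h31]; simp only [Subtype.mk_le_mk]; decide

theorem Diamond_not_subrep : ¬ SubRepresentable Diamond := by
  rintro ⟨g, hiff, hequiv⟩
  -- an embedding bounds cardinalities
  have hcard : ∀ P Q : Set Diamond, Nonempty (↥P ↪o ↥Q) → P.ncard ≤ Q.ncard := by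
    rintro P Q ⟨f⟩
    rw [← Nat.card_coe_set_eq, ← Nat.card_coe_set_eq]
    exact Nat.card_le_card_of_injective f f.injective
  have hVc : VV.ncard = 3 := by
    rw [show VV = ↑({d1,d2,d3} : Finset Diamond) by simp [VV], Set.ncard_coe_finset]; decide
  have hLc : LL.ncard = 3 := by
    rw [show LL = ↑({d0,d1,d2} : Finset Diamond) by simp [LL], Set.ncard_coe_finset]; decide
  have hAc : AA.ncard = 2 := by
    rw [show AA = ↑({d1,d2} : Finset Diamond) by simp [AA], Set.ncard_coe_finset]; decide
  have hgV : (g VV).ncard = 3 := by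
    have h1 := hcard _ _ (hequiv VV).1
    have h2 := hcard _ _ (hequiv VV).2
    omega
  have hgL : (g LL).ncard = 3 := by
    have h1 := hcard _ _ (hequiv LL).1
    have h2 := hcard _ _ (hequiv LL).2
    omega
  have hgA : (g AA).ncard = 2 := by
    have h1 := hcard _ _ (hequiv AA).1
    have h2 := hcard _ _ (hequiv AA).2
    omega
  -- V does not embed into Λ, so g V ≠ g Λ
  have hVL : g VV ≠ g LL := by
    intro h
    obtain ⟨f⟩ := (hiff VV LL).2 (h ▸ subset_rfl)
    have m1 : d1 ∈ VV := by left; rfl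
    have m2 : d2 ∈ VV := by right; left; rfl
    have m3 : d3 ∈ VV := by right; right; rfl
    have key : ∀ x y z : Diamond, (x = d0 ∨ x = d1 ∨ x = d2) →
        (y = d0 ∨ y = d1 ∨ y = d2) → (z = d0 ∨ z = d1 ∨ z = d2) →
        x ≤ z → y ≤ z → x ≤ y ∨ y ≤ x := by decide
    have h13 : f ⟨d1, m1⟩ ≤ f ⟨d3, m3⟩ := f.map_rel_iff.2 (by show d1 ≤ d3; decide)
    have h23 : f ⟨d2, m2⟩ ≤ f ⟨d3, m3⟩ := f.map_rel_iff.2 (by show d2 ≤ d3; decide)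
    have h12 : ¬ (f ⟨d1, m1⟩ ≤ f ⟨d2, m2⟩) := fun hh =>
      absurd (f.map_rel_iff.1 hh) (by show ¬ (d1 ≤ d2); decide)
    have h21 : ¬ (f ⟨d2, m2⟩ ≤ f ⟨d1, m1⟩) := fun hh =>
      absurd (f.map_rel_iff.1 hh) (by show ¬ (d2 ≤ d1); decide)
    have mm : ∀ w : ↥LL, w.1 = d0 ∨ w.1 = d1 ∨ w.1 = d2 := fun w => mem_LL' w.2
    rcases key _ _ _ (mm (f ⟨d1, m1⟩)) (mm (f ⟨d2, m2⟩)) (mm (f ⟨d3, m3⟩))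
        h13 h23 with hc | hc
    · exact h12 hc
    · exact h21 hc
  -- inclusions of images
  have hCV : g CC ⊆ g VV := (hiff CC VV).1 (inclEmb (by
    intro x hx; rcases mem_CC' hx with rfl | rfl <;> simp [VV]))
  have hCL : g CC ⊆ g LL := (hiff CC LL).1 embCL
  have hAV : g AA ⊆ g VV := (hiff AA VV).1 (inclEmb (by
    intro x hx; rcases mem_AA' hx with rfl | rfl <;> simp [VV]))
  have hAL : g AA ⊆ g LL := (hiff AA LL).1 (inclEmb (by
    intro x hx; rcases mem_AA' hx with rfl | rfl <;> simp [LL]))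
  -- (g V ∪ g Λ).ncard = 4
  have hu4 : (g VV ∪ g LL).ncard = 4 := by
    have hle : (g VV ∪ g LL).ncard ≤ 4 := by
      have h1 := Set.ncard_le_ncard (Set.subset_univ (g VV ∪ g LL)) Set.finite_univ
      have h2 : (Set.univ : Set Diamond).ncard = 4 := by
        rw [Set.ncard_univ, Nat.card_eq_fintype_card]; rfl
      omega
    have hge : 3 ≤ (g VV ∪ g LL).ncard :=
      hgV ▸ Set.ncard_le_ncard Set.subset_union_left (Set.toFinite _)
    rcases (by omega : (g VV ∪ g LL).ncard = 3 ∨ (g VV ∪ g LL).ncard = 4) with h3 | h4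
    · exfalso
      have e1 : g VV = g VV ∪ g LL :=
        Set.eq_of_subset_of_ncard_le Set.subset_union_left (by omega) (Set.toFinite _)
      have e2 : g LL = g VV ∪ g LL :=
        Set.eq_of_subset_of_ncard_le Set.subset_union_right (by omega) (Set.toFinite _)
      exact hVL (e1.trans e2.symm)
    · exact h4
  have hi2 : (g VV ∩ g LL).ncard = 2 := by
    have := Set.ncard_union_add_ncard_inter (g VV) (g LL) (Set.toFinite _) (Set.toFinite _)
    omega
  -- g A equals the intersection, hence g C ⊆ g A
  have hAeq : g AA = g VV ∩ g LL :=
    Set.eq_of_subset_of_ncard_le (Set.subset_inter hAV hAL) (by omega) (Set.toFinite _)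
  have hCA : g CC ⊆ g AA := hAeq ▸ Set.subset_inter hCV hCL
  -- but then the 2-chain embeds into the 2-antichain: contradiction
  obtain ⟨f⟩ := (hiff CC AA).2 hCA
  have m1 : d1 ∈ CC := by left; rfl
  have m3 : d3 ∈ CC := by right; rfl
  have h13 : f ⟨d1, m1⟩ ≤ f ⟨d3, m3⟩ := f.map_rel_iff.2 (by show d1 ≤ d3; decide)
  have hne : f ⟨d1, m1⟩ ≠ f ⟨d3, m3⟩ := fun hh =>
    absurd (congrArg Subtype.val (f.injective hh)) (show ¬ ((d1:Diamond) = d3) by decide)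
  have mm : ∀ w : ↥AA, w.1 = d1 ∨ w.1 = d2 := fun w => mem_AA' w.2
  have key : ∀ x y : Diamond, (x = d1 ∨ x = d2) → (y = d1 ∨ y = d2) → x ≤ y → x = y := by decide
  exact hne (Subtype.ext (key _ _ (mm _) (mm _) h13))
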